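/- Correctness of the phase-parallel LIS frontiers: define sets of indices of the sequence A inductively by letting F₁ be the set of prefix-min indices of A, and for r ≥ 1 letting F_{r+1} be the set of indices i not in F₁ ∪ ⋯ ∪ F_r such that A(i) ≤ A(j) for every j < i with j not in F₁ ∪ ⋯ ∪ F_r (the prefix-min indices after removing the first r frontiers). Then for every r ≥ 1, F_r equals the set of indices i with rank(i) = r. -/

import Mathlib

/-- `l` is a strictly increasing subsequence of `A` ending at index `i`. -/
def IsIncEndingAt {n : ℕ} {α : Type*} [LinearOrder α] (A : Fin n → α)
    (l : List (Fin n)) (i : Fin n) : Prop :=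
  l.Chain' (· < ·) ∧ (l.map A).Chain' (· < ·) ∧ l.getLast? = some i

/-- The rank of index `i`: the maximum length of an increasing subsequence of `A`
ending at `i`. -/
noncomputable def lisRank {n : ℕ} {α : Type*} [LinearOrder α] (A : Fin n → α)
    (i : Fin n) : ℕ :=
  sSup {m : ℕ | ∃ l : List (Fin n), IsIncEndingAt A l i ∧ l.length = m}

section Aux

variable {n : ℕ} {α : Type*} [LinearOrder α] (A : Fin n → α)

lemma lisRank_bdd (i : Fin n) :
    BddAbove {m : ℕ | ∃ l : List (Fin n), IsIncEndingAt A l i ∧ l.length = m} := by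
  refine ⟨n, ?_⟩
  rintro m ⟨l, ⟨hc, -, -⟩, rfl⟩
  have hnd : l.Nodup := (List.isChain_iff_pairwise.mp hc).imp ne_of_lt
  calc l.length ≤ Fintype.card (Fin n) := hnd.length_le_card
  _ = n := Fintype.card_fin n

lemma lisRank_mem_one (i : Fin n) :
    1 ∈ {m : ℕ | ∃ l : List (Fin n), IsIncEndingAt A l i ∧ l.length = m} :=
  ⟨[i], ⟨List.isChain_singleton _, List.isChain_singleton _, rfl⟩, rfl⟩

lemma one_le_lisRank (i : Fin n) : 1 ≤ lisRank A i :=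
  le_csSup (lisRank_bdd A i) (lisRank_mem_one A i)

lemma lisRank_attained (i : Fin n) :
    ∃ l : List (Fin n), IsIncEndingAt A l i ∧ l.length = lisRank A i :=
  Nat.sSup_mem ⟨1, lisRank_mem_one A i⟩ (lisRank_bdd A i)

lemma lisRank_step {j i : Fin n} (hji : j < i) (hA : A j < A i) :
    lisRank A j + 1 ≤ lisRank A i := by
  obtain ⟨l, ⟨hc, hcm, hl⟩, hlen⟩ := lisRank_attained A j
  apply le_csSup (lisRank_bdd A i)
  refine ⟨l ++ [i], ⟨?_, ?_, ?_⟩, by simp [hlen]⟩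
  · unfold List.Chain'
    rw [List.isChain_append]
    refine ⟨hc, List.isChain_singleton _, ?_⟩
    intro x hx y hy
    simp only [List.head?_cons, Option.mem_some_iff] at hy
    rw [hl, Option.mem_some_iff] at hx
    subst hx; subst hy; exact hji
  · unfold List.Chain'
    rw [List.map_append, List.isChain_append]
    refine ⟨hcm, List.isChain_singleton _, ?_⟩
    intro x hx y hy
    simp only [List.map_cons, List.map_nil, List.head?_cons, Option.mem_some_iff] at hy
    rw [List.getLast?_map, hl] at hx
    simp only [Option.map_some, Option.mem_some_iff] at hx
    subst hx; subst hy; exact hA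
  · exact List.getLast?_concat

lemma lisRank_decompose {i : Fin n} (h2 : 2 ≤ lisRank A i) :
    ∃ j : Fin n, j < i ∧ A j < A i ∧ lisRank A i ≤ lisRank A j + 1 := by
  obtain ⟨l, ⟨hc, hcm, hl⟩, hlen⟩ := lisRank_attained A i
  have hne : l ≠ [] := by rintro rfl; simp at hl
  have hlast : l.getLast hne = i := by
    rw [List.getLast?_eq_getLast hne, Option.some_inj] at hl; exact hl
  have hdec : l.dropLast ++ [i] = l := by rw [← hlast]; exact List.dropLast_append_getLast hne
  have hlen' : l.dropLast.length = lisRank A i - 1 := by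
    rw [List.length_dropLast, hlen]
  have hne' : l.dropLast ≠ [] := by
    intro h; rw [h] at hlen'; simp at hlen'; omega
  set j := l.dropLast.getLast hne' with hj
  have hjl : l.dropLast.getLast? = some j := List.getLast?_eq_getLast hne'
  rw [← hdec] at hc hcm
  unfold List.Chain' at hc hcm
  rw [List.isChain_append] at hc
  rw [List.map_append, List.isChain_append] at hcm
  have hji : j < i := hc.2.2 j hjl i (by simp)
  have hAji : A j < A i := by
    refine hcm.2.2 (A j) ?_ (A i) (by simp)
    rw [List.getLast?_map, hjl]; rfl
  refine ⟨j, hji, hAji, ?_⟩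
  have : lisRank A i - 1 ≤ lisRank A j :=
    le_csSup (lisRank_bdd A j) ⟨l.dropLast, ⟨hc.1, hcm.1, hjl⟩, hlen'⟩
  omega

lemma lisRank_eq_one_iff (i : Fin n) :
    lisRank A i = 1 ↔ ∀ j : Fin n, j < i → A i ≤ A j := by
  constructor
  · intro h j hji
    by_contra hlt
    push_neg at hlt
    have := lisRank_step A hji hlt
    have := one_le_lisRank A j
    omega
  · intro h
    by_contra hne
    have h2 : 2 ≤ lisRank A i := by have := one_le_lisRank A i; omega
    obtain ⟨j, hji, hAji, -⟩ := lisRank_decompose A h2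
    exact absurd (h j hji) (not_le.mpr hAji)

lemma lisRank_eq_succ_iff (r : ℕ) (hr : 1 ≤ r) (i : Fin n) :
    lisRank A i = r + 1 ↔ (r + 1 ≤ lisRank A i ∧
      ∀ j : Fin n, j < i → r + 1 ≤ lisRank A j → A i ≤ A j) := by
  constructor
  · intro h
    refine ⟨h.ge, fun j hji hrj => ?_⟩
    by_contra hlt
    push_neg at hlt
    have := lisRank_step A hji hlt
    omega
  · rintro ⟨hge, hall⟩
    by_contra hne
    have h2 : 2 ≤ lisRank A i := by omega
    obtain ⟨j, hji, hAji, hle⟩ := lisRank_decompose A h2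
    have hrj : r + 1 ≤ lisRank A j := by omega
    exact absurd (hall j hji hrj) (not_le.mpr hAji)

end Aux

/-- Correctness of the phase-parallel LIS frontiers: if `F 1` is the set of
prefix-min indices of `A`, and for each `r ≥ 1`, `F (r+1)` is the set of indices
not in `F 1 ∪ ⋯ ∪ F r` that are prefix-min after removing `F 1 ∪ ⋯ ∪ F r`,
then for every `r ≥ 1`, `F r` is exactly the set of indices of rank `r`. -/
theorem frontiers_eq_rank_levels {n : ℕ} {α : Type*} [LinearOrder α]
    (A : Fin n → α) (F : ℕ → Set (Fin n))
    (h1 : F 1 = {i : Fin n | ∀ j : Fin n, j < i → A i ≤ A j})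
    (hstep : ∀ r : ℕ, 1 ≤ r → F (r + 1) =
      {i : Fin n | (∀ s : ℕ, 1 ≤ s → s ≤ r → i ∉ F s) ∧
        ∀ j : Fin n, j < i → (∀ s : ℕ, 1 ≤ s → s ≤ r → j ∉ F s) → A i ≤ A j}) :
    ∀ r : ℕ, 1 ≤ r → F r = {i : Fin n | lisRank A i = r} := by
  intro r
  induction r using Nat.strong_induction_on with
  | _ r IH =>
    intro hr
    match r, hr with
    | 1, _ => ext i; simp [h1, lisRank_eq_one_iff A i]
    | (r+2), _ =>
      have hr1 : 1 ≤ r + 1 := by omega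
      have IH' : ∀ s, 1 ≤ s → s ≤ r + 1 → F s = {i : Fin n | lisRank A i = s} :=
        fun s h1s hsr => IH s (by omega) h1s
      have hnotmem : ∀ x : Fin n, (∀ s : ℕ, 1 ≤ s → s ≤ r + 1 → x ∉ F s) ↔
          r + 2 ≤ lisRank A x := by
        intro x
        constructor
        · intro h
          by_contra hlt
          push_neg at hlt
          have h1x := one_le_lisRank A x
          have : x ∈ F (lisRank A x) := by
            rw [IH' _ h1x (by omega)]; rfl
          exact h _ h1x (by omega) this
        · intro h s h1s hs hmem
          rw [IH' s h1s hs] at hmem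
          simp only [Set.mem_setOf_eq] at hmem
          omega
      ext i
      rw [hstep (r+1) hr1]
      simp only [Set.mem_setOf_eq]
      rw [hnotmem i, lisRank_eq_succ_iff A (r+1) hr1 i]
      constructor
      · rintro ⟨h1', h2'⟩
        exact ⟨h1', fun j hji hrj => h2' j hji ((hnotmem j).mpr hrj)⟩
      · rintro ⟨h1', h2'⟩
        exact ⟨h1', fun j hji hj => h2' j hji ((hnotmem j).mp hj)⟩
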